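/- arXiv:0901.1368 — 6 statements merged into one kernel-verified Lean document; each statement's English description precedes it below -/
import Mathlib

section
/- If ω : [0,∞) → [0,∞) is concave with ω(0) = 0, and f : ℝⁿ → ℝ satisfies |f(x) − f(y)| ≤ ω(|x − y|) for all x, y, then for a function K(x) = S(x/|x|)/|x|^{n−1+α} with S continuous on the sphere and mean zero, the truncated integral |∫_{|x−t|≤2ξ} K(x−t) f(t) dt| ≤ C ∫₀^{2ξ} ω(r)/r^α dr, where C depends only on the sup norm of S and n. -/
open MeasureTheory Set Metric

section Aux

variable {E : Type*} [NormedAddCommGroup E] [NormedSpace ℝ E] [MeasurableSpace E]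
  [BorelSpace E] [FiniteDimensional ℝ E] [Nontrivial E]

lemma aux_polar (μ : Measure E) [μ.IsAddHaarMeasure] (g : E → ℝ)
    (G : sphere (0:E) 1 × Ioi (0:ℝ) → ℝ)
    (hg : ∀ (θ : sphere (0:E) 1) (r : Ioi (0:ℝ)), g ((r : ℝ) • (θ : E)) = G (θ, r)) :
    (∫ x, g x ∂μ =
      ∫ p, G p ∂(μ.toSphere.prod (.volumeIoiPow (Module.finrank ℝ E - 1)))) ∧
    (Integrable g μ ↔
      Integrable G (μ.toSphere.prod (.volumeIoiPow (Module.finrank ℝ E - 1)))) := by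
  have hkey : ∀ x : ({0}ᶜ : Set E), g x = G (homeomorphUnitSphereProd E x) := by
    intro x
    have hx : (x : E) ≠ 0 := x.2
    have h := hg ((homeomorphUnitSphereProd E x).1) ((homeomorphUnitSphereProd E x).2)
    rw [← h]
    congr 1
    simp [smul_inv_smul₀ (norm_ne_zero_iff.2 hx)]
  have hcomp : (g ∘ (Subtype.val : ({0}ᶜ : Set E) → E)) =
      G ∘ (homeomorphUnitSphereProd E) := funext hkey
  constructor
  · calc ∫ x, g x ∂μ = ∫ x in ({0}ᶜ : Set E), g x ∂μ := by
          rw [restrict_compl_singleton]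
      _ = ∫ x : ({0}ᶜ : Set E), g x ∂(μ.comap (↑)) :=
          (integral_subtype_comap (measurableSet_singleton _).compl _).symm
      _ = ∫ x : ({0}ᶜ : Set E), G (homeomorphUnitSphereProd E x) ∂(μ.comap (↑)) := by
          exact integral_congr_ae (Filter.Eventually.of_forall hkey)
      _ = _ := μ.measurePreserving_homeomorphUnitSphereProd.integral_comp
          (Homeomorph.measurableEmbedding _) G
  · have h1 : Integrable g μ ↔ Integrable g (μ.restrict ({0}ᶜ : Set E)) := by
      rw [restrict_compl_singleton]
    have h2 : Integrable g (μ.restrict ({0}ᶜ : Set E)) ↔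
        Integrable (g ∘ (↑)) (μ.comap ((↑) : ({0}ᶜ : Set E) → E)) := by
      rw [← map_comap_subtype_coe (measurableSet_singleton (0:E)).compl μ,
        (MeasurableEmbedding.subtype_coe (measurableSet_singleton (0:E)).compl).integrable_map_iff]
    rw [h1, h2, hcomp]
    exact μ.measurePreserving_homeomorphUnitSphereProd.integrable_comp_emb
      (Homeomorph.measurableEmbedding _)

lemma aux_intIoiPow (m : ℕ) (H : ℝ → ℝ)
    (h : IntegrableOn (fun t => t ^ m * H t) (Ioi (0:ℝ))) :
    Integrable (fun r : Ioi (0:ℝ) => H r) (Measure.volumeIoiPow m) := by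
  rw [Measure.volumeIoiPow, integrable_withDensity_iff
    ((measurable_subtype_coe.pow_const m).ennreal_ofReal)
    (ae_of_all _ fun _ => ENNReal.ofReal_lt_top)]
  have h2 : Integrable ((fun t => t ^ m * H t) ∘ (↑))
      (Measure.comap ((↑) : Ioi (0:ℝ) → ℝ) volume) := by
    rw [← (MeasurableEmbedding.subtype_coe measurableSet_Ioi).integrable_map_iff,
      map_comap_subtype_coe measurableSet_Ioi]
    exact h
  refine h2.congr (ae_of_all _ fun r => ?_)
  simp only [Function.comp_apply]
  rw [ENNReal.toReal_ofReal (pow_nonneg (le_of_lt r.2) m), mul_comm]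

lemma aux_indicator_int {R : ℝ} {F : ℝ → ℝ} (h : IntegrableOn F (Ioc 0 R)) :
    IntegrableOn ((Iic R).indicator F) (Ioi (0:ℝ)) := by
  have e : (Ioi (0:ℝ)).indicator ((Iic R).indicator F) = (Ioc 0 R).indicator F := by
    rw [Set.indicator_indicator, Ioi_inter_Iic]
  exact (integrable_indicator_iff measurableSet_Ioi).mp
    (by rw [e]; exact (integrable_indicator_iff measurableSet_Ioc).mpr h)

lemma aux_pow {n : ℕ} (hn : 1 ≤ n) {α β : ℝ} (hβ : β = (n:ℝ) - 1 + α) {t : ℝ}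
    (ht : 0 < t) (c : ℝ) : t ^ (n - 1 : ℕ) * (c / t ^ β) = c / t ^ α := by
  have h1 : (t:ℝ) ^ (n-1:ℕ) = t ^ ((n:ℝ) - 1) := by
    rw [← Real.rpow_natCast, Nat.cast_sub hn, Nat.cast_one]
  have h2 : t ^ β = t ^ ((n:ℝ)-1) * t ^ α := by rw [hβ, Real.rpow_add ht]
  have h3 : t ^ ((n:ℝ)-1) ≠ 0 := ne_of_gt (Real.rpow_pos_of_pos ht _)
  have h4 : t ^ α ≠ 0 := ne_of_gt (Real.rpow_pos_of_pos ht _)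
  rw [h1, h2]
  field_simp

end Aux

lemma aux_main {E : Type*} [NormedAddCommGroup E] [NormedSpace ℝ E] [MeasureSpace E]
    [BorelSpace E] [FiniteDimensional ℝ E] [(volume : Measure E).IsAddHaarMeasure]
    (n : ℕ) (hfin : Module.finrank ℝ E = n) (hn : 2 ≤ n) (α : ℝ) (hα1 : 0 < α) (hα2 : α < 1)
    (S : E → ℝ) (hScont : ContinuousOn S (sphere (0:E) 1))
    (hSmean : ∫ y : sphere (0:E) 1, S y ∂((volume : Measure E).toSphere) = 0) :
    ∃ C > 0, ∀ ω : ℝ → ℝ, ConcaveOn ℝ (Ici 0) ω → MonotoneOn ω (Ici 0) →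
      ContinuousOn ω (Ici 0) → ω 0 = 0 →
      ∀ f : E → ℝ,
        (∀ x y, |f x - f y| ≤ ω ‖x - y‖) →
      ∀ (x : E) (ξ : ℝ), 0 < ξ →
        IntegrableOn
          (fun t => S (‖x - t‖⁻¹ • (x - t)) / ‖x - t‖ ^ ((n : ℝ) - 1 + α) * f t)
          (closedBall x (2 * ξ)) →
        IntegrableOn (fun r => ω r / r ^ α) (Ioc 0 (2 * ξ)) →
        |∫ t in closedBall x (2 * ξ),
            S (‖x - t‖⁻¹ • (x - t)) / ‖x - t‖ ^ ((n : ℝ) - 1 + α) * f t| ≤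
          C * ∫ r in Ioc 0 (2 * ξ), ω r / r ^ α := by
  haveI : Nontrivial E := by
    apply Module.nontrivial_of_finrank_pos (R := ℝ) (M := E)
    rw [hfin]; omega
  have hn1 : 1 ≤ n := by omega
  obtain ⟨M, hM⟩ := (isCompact_sphere (0:E) 1).exists_bound_of_continuousOn hScont
  have hsph : (sphere (0:E) 1).Nonempty := NormedSpace.sphere_nonempty.mpr zero_le_one
  have hM0 : 0 ≤ M := le_trans (norm_nonneg _) (hM hsph.some hsph.some_mem)
  set V : ℝ := ((volume : Measure E) (ball (0:E) 1)).toReal with hVdef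
  have hV : 0 < V := by
    apply ENNReal.toReal_pos (ne_of_gt (measure_ball_pos _ _ one_pos)) measure_ball_lt_top.ne
  refine ⟨(n : ℝ) * V * M + 1, by nlinarith [mul_nonneg (mul_nonneg (Nat.cast_nonneg (α := ℝ) n) hV.le) hM0], ?_⟩
  intro ω hconc hmono hωcont hω0 f hf x ξ hξ hint hωint
  have hωnn : ∀ r : ℝ, 0 ≤ r → 0 ≤ ω r := fun r hr => by
    have := hmono (self_mem_Ici) (mem_Ici.mpr hr) hr
    rwa [hω0] at this
  set R := 2 * ξ with hRdef
  have hR : 0 < R := by positivity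
  set β := (n : ℝ) - 1 + α with hβdef
  have hβpos : 0 < β := by
    have : (2:ℝ) ≤ n := by exact_mod_cast hn
    rw [hβdef]; linarith
  set k : E → ℝ := fun s => S (‖s‖⁻¹ • s) / ‖s‖ ^ β with hkdef
  -- J and its nonnegativity
  set J := ∫ r in Ioc (0:ℝ) R, ω r / r ^ α with hJdef
  have hJ0 : 0 ≤ J := setIntegral_nonneg measurableSet_Ioc fun r hr =>
    div_nonneg (hωnn r hr.1.le) (Real.rpow_nonneg hr.1.le _)
  -- translation to a ball centered at the origin
  have hmp : MeasurePreserving (fun s : E => x - s) volume volume :=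
    Measure.measurePreserving_sub_left volume x
  have hemb : MeasurableEmbedding (fun s : E => x - s) :=
    (MeasurableEquiv.subLeft x).measurableEmbedding
  have hpre : (fun s : E => x - s) ⁻¹' (closedBall x R) = closedBall 0 R := by
    ext s
    simp [mem_closedBall, dist_eq_norm, sub_sub_cancel_left]
  have htrans : (∫ t in closedBall x R, k (x - t) * f t) =
      ∫ s in closedBall (0:E) R, k s * f (x - s) := by
    rw [← hmp.setIntegral_preimage_emb hemb (fun t => k (x - t) * f t) (closedBall x R), hpre]
    exact setIntegral_congr_fun measurableSet_closedBall fun s _ => by simp [sub_sub_cancel]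
  have hint0 : IntegrableOn (fun s => k s * f (x - s)) (closedBall (0:E) R) := by
    have h1 : Integrable ((fun t => k (x - t) * f t) ∘ (fun s : E => x - s))
        (volume.restrict ((fun s : E => x - s) ⁻¹' closedBall x R)) :=
      ((hmp.restrict_preimage measurableSet_closedBall).integrable_comp_emb hemb).mpr hint
    rw [hpre] at h1
    exact h1.congr (ae_of_all _ fun s => by simp [Function.comp, sub_sub_cancel])
  -- indicator versions on all of E
  set g1 : E → ℝ := (closedBall (0:E) R).indicator (fun s => k s * f (x - s)) with hg1def
  set g0 : E → ℝ := (closedBall (0:E) R).indicator k with hg0def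
  set bnd : E → ℝ := (closedBall (0:E) R).indicator (fun s => M * (ω ‖s‖ / ‖s‖ ^ β)) with hbnddef
  set H0 : ℝ → ℝ := fun t => if t ≤ R then 1 / t ^ β else 0 with hH0def
  set Hω : ℝ → ℝ := fun t => if t ≤ R then M * (ω t / t ^ β) else 0 with hHwdef
  -- norms of scaled sphere points
  have hnorm : ∀ (θ : sphere (0:E) 1) (r : Ioi (0:ℝ)), ‖(r:ℝ) • (θ:E)‖ = (r:ℝ) := by
    intro θ r
    rw [norm_smul, mem_sphere_zero_iff_norm.mp θ.2, mul_one, Real.norm_eq_abs,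
      abs_of_pos r.2]
  have hksmul : ∀ (θ : sphere (0:E) 1) (r : Ioi (0:ℝ)),
      k ((r:ℝ) • (θ:E)) = S θ * (1 / (r:ℝ) ^ β) := by
    intro θ r
    show S (‖(r:ℝ) • (θ:E)‖⁻¹ • ((r:ℝ) • (θ:E))) / ‖(r:ℝ) • (θ:E)‖ ^ β = _
    rw [hnorm, inv_smul_smul₀ (ne_of_gt r.2), div_eq_mul_inv, one_div]
  have hmem_iff : ∀ (θ : sphere (0:E) 1) (r : Ioi (0:ℝ)),
      ((r:ℝ) • (θ:E) ∈ closedBall (0:E) R ↔ (r:ℝ) ≤ R) := by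
    intro θ r
    rw [mem_closedBall_zero_iff, hnorm]
  have hg0polar : ∀ (θ : sphere (0:E) 1) (r : Ioi (0:ℝ)),
      g0 ((r:ℝ) • (θ:E)) = (fun p : sphere (0:E) 1 × Ioi (0:ℝ) => S p.1 * H0 p.2) (θ, r) := by
    intro θ r
    by_cases hle : (r:ℝ) ≤ R
    · rw [hg0def, indicator_of_mem ((hmem_iff θ r).mpr hle), hksmul]
      simp [hH0def, hle]
    · rw [hg0def, indicator_of_notMem (fun h => hle ((hmem_iff θ r).mp h))]
      simp [hH0def, hle]
  have hbndpolar : ∀ (θ : sphere (0:E) 1) (r : Ioi (0:ℝ)),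
      bnd ((r:ℝ) • (θ:E)) = (fun p : sphere (0:E) 1 × Ioi (0:ℝ) => (1:ℝ) * Hω p.2) (θ, r) := by
    intro θ r
    by_cases hle : (r:ℝ) ≤ R
    · rw [hbnddef, indicator_of_mem ((hmem_iff θ r).mpr hle), hnorm]
      simp [hHwdef, hle]
    · rw [hbnddef, indicator_of_notMem (fun h => hle ((hmem_iff θ r).mp h))]
      simp [hHwdef, hle]
  -- integrabilities over the radial measure
  have hH0rad : Integrable (fun r : Ioi (0:ℝ) => H0 r) (Measure.volumeIoiPow (n - 1)) := by
    apply aux_intIoiPow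
    have e : (fun t : ℝ => t ^ (n-1:ℕ) * H0 t) =
        (Iic R).indicator (fun t => t ^ (n-1:ℕ) * (1 / t ^ β)) := by
      funext t
      by_cases h : t ≤ R <;>
        simp [hH0def, indicator_apply, mem_Iic, h]
    rw [e]
    apply aux_indicator_int
    have base : IntegrableOn (fun t : ℝ => t ^ (-α)) (Ioc 0 R) := by
      rw [← intervalIntegrable_iff_integrableOn_Ioc_of_le hR.le]
      exact intervalIntegral.intervalIntegrable_rpow' (by linarith)
    apply base.congr_fun ?_ measurableSet_Ioc
    intro t ht
    show t ^ (-α) = t ^ (n - 1 : ℕ) * (1 / t ^ β)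
    rw [Real.rpow_neg ht.1.le, ← one_div, ← aux_pow hn1 hβdef ht.1 1]
  have hHwrad : Integrable (fun r : Ioi (0:ℝ) => Hω r) (Measure.volumeIoiPow (n - 1)) := by
    apply aux_intIoiPow
    have e : (fun t : ℝ => t ^ (n-1:ℕ) * Hω t) =
        (Iic R).indicator (fun t => t ^ (n-1:ℕ) * (M * (ω t / t ^ β))) := by
      funext t
      by_cases h : t ≤ R <;>
        simp [hHwdef, indicator_apply, mem_Iic, h]
    rw [e]
    apply aux_indicator_int
    have base : IntegrableOn (fun t : ℝ => M * (ω t / t ^ α)) (Ioc 0 R) := hωint.const_mul M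
    apply base.congr_fun ?_ measurableSet_Ioc
    intro t ht
    show M * (ω t / t ^ α) = t ^ (n - 1 : ℕ) * (M * (ω t / t ^ β))
    rw [mul_div_assoc', ← aux_pow hn1 hβdef ht.1 (M * ω t)]
    ring
  -- integrability of S on the sphere
  have hSint : Integrable (fun θ : sphere (0:E) 1 => S θ) ((volume : Measure E).toSphere) := by
    refine Integrable.mono' (integrable_const M) ?_ (ae_of_all _ fun θ => hM θ θ.2)
    exact (ContinuousOn.restrict hScont).aestronglyMeasurable
  have hone : Integrable (fun _ : sphere (0:E) 1 => (1:ℝ)) ((volume : Measure E).toSphere) :=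
    integrable_const 1
  -- apply the polar decomposition
  have hfin' : Module.finrank ℝ E - 1 = n - 1 := by rw [hfin]
  have hpolar0 := aux_polar (volume : Measure E) g0
    (fun p : sphere (0:E) 1 × Ioi (0:ℝ) => S p.1 * H0 p.2) hg0polar
  have hpolarb := aux_polar (volume : Measure E) bnd
    (fun p : sphere (0:E) 1 × Ioi (0:ℝ) => (1:ℝ) * Hω p.2) hbndpolar
  rw [hfin'] at hpolar0 hpolarb
  have hg0int : Integrable g0 (volume : Measure E) :=
    hpolar0.2.mpr (hSint.mul_prod hH0rad)
  have hbndint : Integrable bnd (volume : Measure E) :=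
    hpolarb.2.mpr (hone.mul_prod hHwrad)
  have hg0zero : ∫ s, g0 s ∂(volume : Measure E) = 0 := by
    rw [hpolar0.1, integral_prod_mul (fun θ : sphere (0:E) 1 => S θ)
      (fun r : Ioi (0:ℝ) => H0 r), hSmean, zero_mul]
  have hg1int : Integrable g1 (volume : Measure E) :=
    (integrable_indicator_iff measurableSet_closedBall).mpr hint0
  set g2 : E → ℝ := fun s => g1 s - f x * g0 s with hg2def
  have hg2int : Integrable g2 (volume : Measure E) := hg1int.sub (hg0int.const_mul (f x))
  -- pointwise bound for g2
  have hg2bd : ∀ s : E, ‖g2 s‖ ≤ bnd s := by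
    intro s
    by_cases hs : s ∈ closedBall (0:E) R
    · simp only [hg2def, hg1def, hg0def, hbnddef, indicator_of_mem hs]
      have e : k s * f (x - s) - f x * k s = k s * (f (x - s) - f x) := by ring
      rw [e, Real.norm_eq_abs, abs_mul]
      by_cases h0 : s = 0
      · subst h0
        simp [hkdef, Real.zero_rpow (ne_of_gt hβpos), hω0]
      · have hsn : 0 < ‖s‖ := norm_pos_iff.mpr h0
        have hθmem : ‖s‖⁻¹ • s ∈ sphere (0:E) 1 := by
          rw [mem_sphere_zero_iff_norm, norm_smul, norm_inv, norm_norm,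
            inv_mul_cancel₀ (ne_of_gt hsn)]
        have h1 : |k s| ≤ M / ‖s‖ ^ β := by
          show |S (‖s‖⁻¹ • s) / ‖s‖ ^ β| ≤ _
          rw [abs_div, abs_of_pos (Real.rpow_pos_of_pos hsn β)]
          have := hM _ hθmem
          rw [Real.norm_eq_abs] at this
          gcongr
        have h2 : |f (x - s) - f x| ≤ ω ‖s‖ := by
          have h3 := hf (x - s) x
          have e2 : x - s - x = -s := by abel
          rwa [e2, norm_neg] at h3
        calc |k s| * |f (x - s) - f x| ≤ (M / ‖s‖ ^ β) * ω ‖s‖ :=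
              mul_le_mul h1 h2 (abs_nonneg _) (div_nonneg hM0 (Real.rpow_nonneg hsn.le _))
          _ = M * (ω ‖s‖ / ‖s‖ ^ β) := by ring
    · simp only [hg2def, hg1def, hg0def, hbnddef, indicator_of_notMem hs]
      simp
  -- value of the bound integral
  have hbndval : ∫ s, bnd s ∂(volume : Measure E) = (n:ℝ) * V * (M * J) := by
    have hrad : bnd = fun s : E => Hω ‖s‖ := by
      funext s
      by_cases hs : s ∈ closedBall (0:E) R
      · simp only [hbnddef, indicator_of_mem hs, hHwdef]
        simp [mem_closedBall_zero_iff.mp hs]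
      · simp only [hbnddef, indicator_of_notMem hs, hHwdef]
        rw [if_neg (fun h => hs (mem_closedBall_zero_iff.mpr h))]
    have hinner : (∫ t in Ioi (0:ℝ), t ^ (n - 1 : ℕ) • Hω t) = M * J := by
      have e1 : (∫ t in Ioi (0:ℝ), t ^ (n - 1 : ℕ) • Hω t) =
          ∫ t in Ioi (0:ℝ), (Iic R).indicator (fun t => M * (ω t / t ^ α)) t := by
        refine setIntegral_congr_fun measurableSet_Ioi fun t ht => ?_
        rw [smul_eq_mul, hHwdef]
        by_cases h : t ≤ R
        · simp only [if_pos h, indicator_of_mem (mem_Iic.mpr h)]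
          rw [show M * (ω t / t ^ β) = (M * ω t) / t ^ β by ring,
            aux_pow hn1 hβdef ht (M * ω t)]
          ring
        · simp [h, indicator_of_notMem, mem_Iic]
      rw [e1, setIntegral_indicator measurableSet_Iic, Ioi_inter_Iic, integral_const_mul, hJdef]
    rw [hrad, integral_fun_norm_addHaar (volume : Measure E) Hω, hfin, hinner,
      nsmul_eq_mul, smul_eq_mul, measureReal_def, ← hVdef]
    ring
  -- putting everything together
  calc |∫ t in closedBall x R, S (‖x - t‖⁻¹ • (x - t)) / ‖x - t‖ ^ β * f t|
      = |∫ s in closedBall (0:E) R, k s * f (x - s)| := by rw [← htrans]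
    _ = |∫ s, g1 s ∂(volume : Measure E)| := by
        rw [hg1def, integral_indicator measurableSet_closedBall]
    _ = |∫ s, (g2 s + f x * g0 s) ∂(volume : Measure E)| := by
        congr 1
        refine integral_congr_ae (ae_of_all _ fun s => ?_)
        rw [hg2def]; ring
    _ = |(∫ s, g2 s ∂(volume : Measure E)) + f x * ∫ s, g0 s ∂(volume : Measure E)| := by
        rw [integral_add hg2int (hg0int.const_mul (f x)), integral_const_mul]
    _ = |∫ s, g2 s ∂(volume : Measure E)| := by rw [hg0zero, mul_zero, add_zero]
    _ ≤ ∫ s, bnd s ∂(volume : Measure E) := by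
        rw [← Real.norm_eq_abs]
        exact norm_integral_le_of_norm_le hbndint (ae_of_all _ hg2bd)
    _ = (n:ℝ) * V * (M * J) := hbndval
    _ ≤ ((n:ℝ) * V * M + 1) * J := by nlinarith

/-- Truncated singular integral bound: if f has modulus of continuity ω and
K(x) = S(x/|x|)/|x|^{n−1+α} with S continuous on the sphere and mean zero, then
|∫_{|x−t|≤2ξ} K(x−t) f(t) dt| ≤ C ∫₀^{2ξ} ω(r)/r^α dr, with C = C(n, S). -/
theorem stmt_3 (n : ℕ) (hn : 2 ≤ n) (α : ℝ) (hα1 : 0 < α) (hα2 : α < 1)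
    (S : EuclideanSpace ℝ (Fin n) → ℝ)
    (hScont : ContinuousOn S (sphere (0 : EuclideanSpace ℝ (Fin n)) 1))
    (hSmean : ∫ y : sphere (0 : EuclideanSpace ℝ (Fin n)) 1, S y
        ∂((volume : Measure (EuclideanSpace ℝ (Fin n))).toSphere) = 0) :
    ∃ C > 0, ∀ ω : ℝ → ℝ, ConcaveOn ℝ (Ici 0) ω → MonotoneOn ω (Ici 0) →
      ContinuousOn ω (Ici 0) → ω 0 = 0 →
      ∀ f : EuclideanSpace ℝ (Fin n) → ℝ,
        (∀ x y, |f x - f y| ≤ ω ‖x - y‖) →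
      ∀ (x : EuclideanSpace ℝ (Fin n)) (ξ : ℝ), 0 < ξ →
        IntegrableOn
          (fun t => S (‖x - t‖⁻¹ • (x - t)) / ‖x - t‖ ^ ((n : ℝ) - 1 + α) * f t)
          (closedBall x (2 * ξ)) →
        IntegrableOn (fun r => ω r / r ^ α) (Ioc 0 (2 * ξ)) →
        |∫ t in closedBall x (2 * ξ),
            S (‖x - t‖⁻¹ • (x - t)) / ‖x - t‖ ^ ((n : ℝ) - 1 + α) * f t| ≤
          C * ∫ r in Ioc 0 (2 * ξ), ω r / r ^ α := by
  exact aux_main n finrank_euclideanSpace_fin hn α hα1 hα2 S hScont hSmean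
end

section
/- Define ω : [0,∞) → [0,∞) for α ∈ (0,1) by ω(ξ) = ξ − ξ^{1+α/2} for 0 ≤ ξ ≤ δ and ω'(ξ) = γ/(2(ξ + ξ^α)) for ξ > δ (with ω continuous at δ). If δ > 0 is sufficiently small and 0 < γ < δ, then ω is a strictly increasing, concave modulus of continuity on [0,∞) with ω(0) = 0, ω'(0) = 1, and lim_{η→0+} ω''(η) = −∞. -/
open Set MeasureTheory Filter

/-- The modulus of continuity MOC₁: ω(ξ) = ξ − ξ^{1+α/2} on [0,δ] and
ω'(ξ) = γ/(2(ξ + ξ^α)) for ξ > δ (continuous at δ). -/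
noncomputable def moc1 (α δ γ : ℝ) (ξ : ℝ) : ℝ :=
  if ξ ≤ δ then ξ - ξ ^ (1 + α / 2)
  else (δ - δ ^ (1 + α / 2)) + ∫ η in Ioc δ ξ, γ / (2 * (η + η ^ α))

namespace Moc1Aux

/-- the derivative function -/
noncomputable def phi (α δ γ ξ : ℝ) : ℝ :=
  if ξ ≤ δ then 1 - (1 + α / 2) * ξ ^ (α / 2) else γ / (2 * (ξ + ξ ^ α))

lemma hasDerivAt_f {α : ℝ} (hα1 : 0 < α) (t : ℝ) :
    HasDerivAt (fun s : ℝ => s - s ^ (1 + α / 2)) (1 - (1 + α / 2) * t ^ (α / 2)) t := by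
  have h := Real.hasDerivAt_rpow_const (x := t) (p := 1 + α / 2) (Or.inr (by linarith))
  have e : (1 + α / 2) - 1 = α / 2 := by ring
  rw [e] at h
  exact (hasDerivAt_id' t).sub h

lemma f_sub_ge {α : ℝ} (hα1 : 0 < α) {a b c : ℝ} (hab : a ≤ b)
    (hc : ∀ t ∈ Ioo a b, c ≤ 1 - (1 + α / 2) * t ^ (α / 2)) :
    c * (b - a) ≤ (b - b ^ (1 + α / 2)) - (a - a ^ (1 + α / 2)) := by
  set h : ℝ → ℝ := fun s => (s - s ^ (1 + α / 2)) - c * s with hh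
  have hd : ∀ t : ℝ, HasDerivAt h ((1 - (1 + α / 2) * t ^ (α / 2)) - c) t := fun t => by
    exact ((hasDerivAt_f hα1 t).sub ((hasDerivAt_id' t).const_mul c)).congr_deriv (by ring)
  have hmono : MonotoneOn h (Icc a b) := by
    apply monotoneOn_of_deriv_nonneg (convex_Icc a b)
      (fun t _ => (hd t).continuousAt.continuousWithinAt)
      (fun t _ => (hd t).differentiableAt.differentiableWithinAt)
    intro t ht
    rw [interior_Icc] at ht
    rw [(hd t).deriv]
    linarith [hc t ht]
  have := hmono (left_mem_Icc.2 hab) (right_mem_Icc.2 hab) hab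
  simp only [hh] at this
  linarith

lemma f_sub_le {α : ℝ} (hα1 : 0 < α) {a b c : ℝ} (hab : a ≤ b)
    (hc : ∀ t ∈ Ioo a b, 1 - (1 + α / 2) * t ^ (α / 2) ≤ c) :
    (b - b ^ (1 + α / 2)) - (a - a ^ (1 + α / 2)) ≤ c * (b - a) := by
  set h : ℝ → ℝ := fun s => c * s - (s - s ^ (1 + α / 2)) with hh
  have hd : ∀ t : ℝ, HasDerivAt h (c - (1 - (1 + α / 2) * t ^ (α / 2))) t := fun t => by
    exact (((hasDerivAt_id' t).const_mul c).sub (hasDerivAt_f hα1 t)).congr_deriv (by ring)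
  have hmono : MonotoneOn h (Icc a b) := by
    apply monotoneOn_of_deriv_nonneg (convex_Icc a b)
      (fun t _ => (hd t).continuousAt.continuousWithinAt)
      (fun t _ => (hd t).differentiableAt.differentiableWithinAt)
    intro t ht
    rw [interior_Icc] at ht
    rw [(hd t).deriv]
    linarith [hc t ht]
  have := hmono (left_mem_Icc.2 hab) (right_mem_Icc.2 hab) hab
  simp only [hh] at this
  linarith


lemma g_anti {α γ : ℝ} (hα1 : 0 < α) (hγ : 0 ≤ γ) {s t : ℝ} (hs : 0 < s) (hst : s ≤ t) :
    γ / (2 * (t + t ^ α)) ≤ γ / (2 * (s + s ^ α)) := by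
  have h1 : s ^ α ≤ t ^ α := Real.rpow_le_rpow hs.le hst hα1.le
  have h2 : (0:ℝ) < s ^ α := Real.rpow_pos_of_pos hs α
  have hb : (0:ℝ) < 2 * (s + s ^ α) := by positivity
  exact div_le_div_of_nonneg_left hγ hb (by linarith)

lemma g_pos {α γ : ℝ} (hγ : 0 < γ) {t : ℝ} (ht : 0 < t) :
    0 < γ / (2 * (t + t ^ α)) := by
  have h2 : (0:ℝ) < t ^ α := Real.rpow_pos_of_pos ht α
  positivity

lemma g_integrable {α γ : ℝ} {a b : ℝ} (ha : 0 < a) (hab : a ≤ b) :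
    IntervalIntegrable (fun η => γ / (2 * (η + η ^ α))) volume a b := by
  apply ContinuousOn.intervalIntegrable
  rw [uIcc_of_le hab]
  intro η hη
  have hη0 : 0 < η := lt_of_lt_of_le ha hη.1
  have hpow : ContinuousWithinAt (fun η : ℝ => η ^ α) (Icc a b) η :=
    (Real.continuousAt_rpow_const η α (Or.inl hη0.ne')).continuousWithinAt
  have hden : ContinuousWithinAt (fun η : ℝ => 2 * (η + η ^ α)) (Icc a b) η :=
    (continuousWithinAt_const.mul (continuousWithinAt_id.add hpow))
  apply continuousWithinAt_const.div hden
  have : (0:ℝ) < η ^ α := Real.rpow_pos_of_pos hη0 α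
  positivity

lemma moc1_rep {α δ γ : ℝ} {ξ : ℝ} (hξ : δ ≤ ξ) :
    moc1 α δ γ ξ = (δ - δ ^ (1 + α / 2)) + ∫ η in δ..ξ, γ / (2 * (η + η ^ α)) := by
  rcases eq_or_lt_of_le hξ with h | h
  · rw [← h]
    simp [moc1, intervalIntegral.integral_same]
  · rw [moc1, if_neg (not_le.2 h), intervalIntegral.integral_of_le h.le]

/-- bounds for the integral piece -/
lemma int_bounds {α γ : ℝ} (hα1 : 0 < α) (hγ : 0 ≤ γ) {a b : ℝ} (ha : 0 < a) (hab : a ≤ b) :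
    γ / (2 * (b + b ^ α)) * (b - a) ≤ (∫ η in a..b, γ / (2 * (η + η ^ α))) ∧
    (∫ η in a..b, γ / (2 * (η + η ^ α))) ≤ γ / (2 * (a + a ^ α)) * (b - a) := by
  constructor
  · have h := intervalIntegral.integral_mono_on (f := fun _ => γ / (2 * (b + b ^ α)))
      (g := fun η => γ / (2 * (η + η ^ α))) (μ := volume) hab
      intervalIntegrable_const (g_integrable ha hab)
      (fun t ht => g_anti hα1 hγ (lt_of_lt_of_le ha ht.1) ht.2)
    rw [show γ / (2 * (b + b ^ α)) * (b - a) = (b - a) • (γ / (2 * (b + b ^ α))) by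
      rw [smul_eq_mul]; ring, ← intervalIntegral.integral_const]
    exact h
  · have h := intervalIntegral.integral_mono_on (g := fun _ => γ / (2 * (a + a ^ α)))
      (f := fun η => γ / (2 * (η + η ^ α))) (μ := volume) hab
      (g_integrable ha hab) intervalIntegrable_const
      (fun t ht => g_anti hα1 hγ ha ht.1)
    rw [show γ / (2 * (a + a ^ α)) * (b - a) = (b - a) • (γ / (2 * (a + a ^ α))) by
      rw [smul_eq_mul]; ring, ← intervalIntegral.integral_const]
    exact h



section assume_all
variable {α δ γ : ℝ} (hα1 : 0 < α) (hα2 : α < 1) (hγ : 0 < γ) (hγδ : γ < δ)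
  (hδs : δ ^ (α/2) < 1/3)

include hα1 hα2 hγ hγδ hδs

lemma key_ineq : γ / (2 * (δ + δ ^ α)) ≤ 1 - (1 + α/2) * δ ^ (α/2) := by
  have hδpos : 0 < δ := hγ.trans hγδ
  have hδ1 : δ < 1 := by
    by_contra h
    push_neg at h
    have := Real.one_le_rpow h (by positivity : (0:ℝ) ≤ α/2)
    linarith
  have h1 : δ ≤ δ ^ α := by
    have := Real.rpow_le_rpow_of_exponent_ge hδpos hδ1.le hα2.le
    rwa [Real.rpow_one] at this
  have hs0 : (0:ℝ) ≤ δ ^ (α/2) := Real.rpow_nonneg hδpos.le _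
  have h3 : (1 + α/2) * δ ^ (α/2) ≤ (3/2) * (1/3) :=
    mul_le_mul (by linarith) hδs.le hs0 (by norm_num)
  have hden : (0:ℝ) < 2 * (δ + δ ^ α) := by
    have := Real.rpow_pos_of_pos hδpos α
    positivity
  rw [div_le_iff₀ hden]
  nlinarith [h3, h1, hγδ, hs0]

lemma phi_pos {x : ℝ} (hx : 0 ≤ x) : 0 < phi α δ γ x := by
  have hδpos : 0 < δ := hγ.trans hγδ
  rw [phi]
  split_ifs with h
  · have h1 : x ^ (α/2) ≤ δ ^ (α/2) := Real.rpow_le_rpow hx h (by positivity)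
    have hs0 : (0:ℝ) ≤ x ^ (α/2) := Real.rpow_nonneg hx _
    nlinarith [mul_le_mul (le_refl (1 + α/2)) (h1.trans_lt hδs).le hs0 (by linarith : (0:ℝ) ≤ 1 + α/2)]
  · exact g_pos hγ (hδpos.trans (not_le.1 h))

lemma phi_le_one {x : ℝ} (hx : 0 ≤ x) : phi α δ γ x ≤ 1 := by
  have hδpos : 0 < δ := hγ.trans hγδ
  rw [phi]
  split_ifs with h
  · have hs0 : (0:ℝ) ≤ x ^ (α/2) := Real.rpow_nonneg hx _
    nlinarith
  · have h1 := g_anti (γ := γ) hα1 hγ.le hδpos (not_le.1 h).le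
    have h2 := key_ineq hα1 hα2 hγ hγδ hδs
    have hs0 : (0:ℝ) ≤ δ ^ (α/2) := Real.rpow_nonneg hδpos.le _
    nlinarith

lemma slope_bounds {x y : ℝ} (hx : 0 ≤ x) (hxy : x < y) :
    phi α δ γ y * (y - x) ≤ moc1 α δ γ y - moc1 α δ γ x ∧
    moc1 α δ γ y - moc1 α δ γ x ≤ phi α δ γ x * (y - x) := by
  have hδpos : 0 < δ := hγ.trans hγδ
  have hkey := key_ineq hα1 hα2 hγ hγδ hδs
  by_cases hyδ : y ≤ δ
  · -- both in the lower piece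
    have hxδ : x ≤ δ := hxy.le.trans hyδ
    rw [moc1, moc1, phi, phi, if_pos hxδ, if_pos hyδ, if_pos hxδ, if_pos hyδ]
    constructor
    · apply f_sub_ge hα1 hxy.le
      intro t ht
      have h1 : t ^ (α/2) ≤ y ^ (α/2) :=
        Real.rpow_le_rpow (hx.trans ht.1.le) ht.2.le (by positivity)
      nlinarith
    · apply f_sub_le hα1 hxy.le
      intro t ht
      have h1 : x ^ (α/2) ≤ t ^ (α/2) :=
        Real.rpow_le_rpow hx ht.1.le (by positivity)
      nlinarith
  · have hδy : δ < y := not_le.1 hyδ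
    by_cases hxδ : δ ≤ x
    · -- both in the upper piece
      have hx0 : 0 < x := hδpos.trans_le hxδ
      have e : moc1 α δ γ y - moc1 α δ γ x = ∫ η in x..y, γ / (2 * (η + η ^ α)) := by
        rw [moc1_rep (hxδ.trans hxy.le), moc1_rep hxδ]
        rw [add_sub_add_left_eq_sub]
        exact intervalIntegral.integral_interval_sub_left
          (g_integrable hδpos (hxδ.trans hxy.le)) (g_integrable hδpos hxδ)
      obtain ⟨hl, hu⟩ := int_bounds (γ := γ) hα1 hγ.le hx0 hxy.le
      rw [e, phi, phi, if_neg hyδ]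
      constructor
      · exact hl
      · split_ifs with h
        · -- x = δ
          have hxeq : x = δ := le_antisymm h hxδ
          subst hxeq
          calc (∫ η in x..y, γ / (2 * (η + η ^ α))) ≤ γ / (2 * (x + x ^ α)) * (y - x) := hu
            _ ≤ (1 - (1 + α/2) * x ^ (α/2)) * (y - x) :=
                mul_le_mul_of_nonneg_right hkey (by linarith)
        · exact hu
    · -- x < δ < y : combine both pieces
      have hxδ' : x < δ := not_le.1 hxδ
      have e1 : moc1 α δ γ y - moc1 α δ γ δ = ∫ η in δ..y, γ / (2 * (η + η ^ α)) := by
        rw [moc1_rep (le_refl δ), moc1_rep hδy.le, add_sub_add_left_eq_sub,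
          intervalIntegral.integral_same, sub_zero]
      obtain ⟨hl2, hu2⟩ := int_bounds (γ := γ) hα1 hγ.le hδpos hδy.le
      have hl1 : (1 - (1 + α/2) * δ ^ (α/2)) * (δ - x) ≤ moc1 α δ γ δ - moc1 α δ γ x := by
        rw [moc1, moc1, if_pos (le_refl δ), if_pos hxδ'.le]
        apply f_sub_ge hα1 hxδ'.le
        intro t ht
        have h1 : t ^ (α/2) ≤ δ ^ (α/2) :=
          Real.rpow_le_rpow (hx.trans ht.1.le) ht.2.le (by positivity)
        nlinarith
      have hu1 : moc1 α δ γ δ - moc1 α δ γ x ≤ (1 - (1 + α/2) * x ^ (α/2)) * (δ - x) := by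
        rw [moc1, moc1, if_pos (le_refl δ), if_pos hxδ'.le]
        apply f_sub_le hα1 hxδ'.le
        intro t ht
        have h1 : x ^ (α/2) ≤ t ^ (α/2) :=
          Real.rpow_le_rpow hx ht.1.le (by positivity)
        nlinarith
      have hgy : γ / (2 * (y + y ^ α)) ≤ γ / (2 * (δ + δ ^ α)) :=
        g_anti hα1 hγ.le hδpos hδy.le
      have hfdx : (1 - (1 + α/2) * δ ^ (α/2)) ≤ (1 - (1 + α/2) * x ^ (α/2)) := by
        have h1 : x ^ (α/2) ≤ δ ^ (α/2) := Real.rpow_le_rpow hx hxδ'.le (by positivity)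
        nlinarith
      rw [phi, phi, if_neg hyδ, if_pos hxδ'.le]
      constructor
      · have h5 : γ / (2 * (y + y ^ α)) * (δ - x) ≤ (1 - (1 + α/2) * δ ^ (α/2)) * (δ - x) :=
          mul_le_mul_of_nonneg_right (hgy.trans hkey) (by linarith)
        nlinarith [hl2, hl1, h5]
      · have h5 : γ / (2 * (δ + δ ^ α)) * (y - δ) ≤ (1 - (1 + α/2) * x ^ (α/2)) * (y - δ) :=
          mul_le_mul_of_nonneg_right (hkey.trans hfdx) (by linarith)
        nlinarith [hu2, hu1, h5]

end assume_all
end Moc1Aux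

/-- For δ sufficiently small and 0 < γ < δ, MOC₁ is a strictly increasing, concave,
continuous modulus of continuity with ω(0) = 0, ω'(0) = 1 and ω''(η) → −∞ as η → 0⁺. -/
theorem stmt_9 (α : ℝ) (hα1 : 0 < α) (hα2 : α < 1) :
    ∃ δ₀ > 0, ∀ δ γ : ℝ, 0 < γ → γ < δ → δ < δ₀ →
      StrictMonoOn (moc1 α δ γ) (Ici 0) ∧
      ConcaveOn ℝ (Ici 0) (moc1 α δ γ) ∧
      ContinuousOn (moc1 α δ γ) (Ici 0) ∧
      moc1 α δ γ 0 = 0 ∧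
      HasDerivWithinAt (moc1 α δ γ) 1 (Ici 0) 0 ∧
      Tendsto (fun η => deriv (deriv (moc1 α δ γ)) η) (nhdsWithin 0 (Ioi 0)) atBot := by
  refine ⟨(3:ℝ) ^ (-(2/α)), Real.rpow_pos_of_pos (by norm_num) _, ?_⟩
  intro δ γ hγ hγδ hδδ₀
  have hδpos : 0 < δ := hγ.trans hγδ
  have hδs : δ ^ (α/2) < 1/3 := by
    have h := Real.rpow_lt_rpow hδpos.le hδδ₀ (by positivity : (0:ℝ) < α/2)
    calc δ ^ (α/2) < ((3:ℝ) ^ (-(2/α))) ^ (α/2) := h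
      _ = (3:ℝ) ^ ((-(2/α)) * (α/2)) := (Real.rpow_mul (by norm_num) _ _).symm
      _ = (3:ℝ) ^ (-1 : ℝ) := by rw [show (-(2/α)) * (α/2) = -1 by field_simp]
      _ = 1/3 := by rw [Real.rpow_neg_one]; norm_num
  have hmono : StrictMonoOn (moc1 α δ γ) (Ici 0) := by
    intro x hx y hy hxy
    have h := (Moc1Aux.slope_bounds hα1 hα2 hγ hγδ hδs hx hxy).1
    have hp := Moc1Aux.phi_pos hα1 hα2 hγ hγδ hδs (le_trans hx hxy.le)
    nlinarith [mul_pos hp (sub_pos.2 hxy)]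
  refine ⟨hmono, ?_, ?_, ?_, ?_, ?_⟩
  · -- concavity
    apply concaveOn_of_slope_anti_adjacent (convex_Ici 0)
    intro x y z hx hz hxy hyz
    have hy0 : (0:ℝ) ≤ y := le_trans hx hxy.le
    have h1 := (Moc1Aux.slope_bounds hα1 hα2 hγ hγδ hδs hx hxy).1
    have h2 := (Moc1Aux.slope_bounds hα1 hα2 hγ hγδ hδs hy0 hyz).2
    have e1 : Moc1Aux.phi α δ γ y ≤ (moc1 α δ γ y - moc1 α δ γ x) / (y - x) :=
      (le_div_iff₀ (by linarith)).2 h1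
    have e2 : (moc1 α δ γ z - moc1 α δ γ y) / (z - y) ≤ Moc1Aux.phi α δ γ y :=
      (div_le_iff₀ (by linarith)).2 h2
    exact e2.trans e1
  · -- continuity
    have key : ∀ a b : ℝ, 0 ≤ a → a < b → |moc1 α δ γ b - moc1 α δ γ a| ≤ b - a := by
      intro a b ha hab
      have hb := Moc1Aux.slope_bounds hα1 hα2 hγ hγδ hδs ha hab
      have hpb := (Moc1Aux.phi_pos hα1 hα2 hγ hγδ hδs (ha.trans hab.le)).le
      have hle := Moc1Aux.phi_le_one hα1 hα2 hγ hγδ hδs ha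
      rw [abs_of_nonneg]
      · nlinarith [hb.2, mul_le_mul_of_nonneg_right hle (sub_pos.2 hab).le]
      · nlinarith [hb.1, mul_nonneg hpb (sub_pos.2 hab).le]
    have hlip : LipschitzOnWith 1 (moc1 α δ γ) (Ici 0) := by
      apply LipschitzOnWith.of_dist_le_mul
      intro x hx y hy
      rw [Real.dist_eq, Real.dist_eq, NNReal.coe_one, one_mul]
      rcases lt_trichotomy x y with h | h | h
      · rw [abs_sub_comm, abs_sub_comm x y, abs_of_pos (sub_pos.2 h)]
        exact key x y hx h
      · simp [h]
      · rw [abs_of_pos (sub_pos.2 h)]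
        exact key y x hy h
    exact hlip.continuousOn
  · -- value at 0
    rw [moc1, if_pos hδpos.le, Real.zero_rpow (by positivity : (1 + α/2) ≠ 0), sub_zero]
  · -- derivative 1 at 0
    have hf : HasDerivAt (fun ξ : ℝ => ξ - ξ ^ (1 + α / 2)) 1 0 := by
      have h := Moc1Aux.hasDerivAt_f hα1 0
      rw [Real.zero_rpow (by positivity : (α/2) ≠ 0)] at h
      simpa using h
    have heq : moc1 α δ γ =ᶠ[nhds 0] fun ξ : ℝ => ξ - ξ ^ (1 + α / 2) := by
      filter_upwards [Iic_mem_nhds hδpos] with ξ hξ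
      rw [moc1, if_pos (mem_Iic.mp hξ)]
    exact (hf.congr_of_eventuallyEq heq).hasDerivWithinAt
  · -- second derivative blows up
    have hfdfun : deriv (fun ξ : ℝ => ξ - ξ ^ (1 + α / 2)) =
        fun t : ℝ => 1 - (1 + α / 2) * t ^ (α / 2) :=
      funext fun t => (Moc1Aux.hasDerivAt_f hα1 t).deriv
    have hptw : (fun η => deriv (deriv (moc1 α δ γ)) η) =ᶠ[nhdsWithin 0 (Ioi 0)]
        (fun η : ℝ => -((1 + α / 2) * (α / 2) * η ^ (α / 2 - 1))) := by
      filter_upwards [Ioo_mem_nhdsGT_of_mem (show (0:ℝ) ∈ Ico 0 δ from ⟨le_refl 0, hδpos⟩)]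
        with η hη
      have hη0 : (0:ℝ) < η := hη.1
      have e1 : moc1 α δ γ =ᶠ[nhds η] fun ξ : ℝ => ξ - ξ ^ (1 + α / 2) := by
        filter_upwards [Iio_mem_nhds hη.2] with t ht
        rw [moc1, if_pos (le_of_lt (mem_Iio.mp ht))]
      have e2 : deriv (moc1 α δ γ) =ᶠ[nhds η] fun t : ℝ => 1 - (1 + α / 2) * t ^ (α / 2) := by
        have h := e1.deriv
        rwa [hfdfun] at h
      rw [e2.deriv_eq]
      have h := Real.hasDerivAt_rpow_const (x := η) (p := α / 2) (Or.inl hη0.ne')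
      have h2 : HasDerivAt (fun t : ℝ => 1 - (1 + α / 2) * t ^ (α / 2))
          (-((1 + α / 2) * (α / 2 * η ^ (α / 2 - 1)))) η :=
        (h.const_mul (1 + α / 2)).const_sub 1
      rw [h2.deriv]
      ring
    refine Tendsto.congr' hptw.symm ?_
    have hq : (0:ℝ) < 1 - α/2 := by linarith
    have h2 : Tendsto (fun η : ℝ => η ^ (1 - α/2)) (nhdsWithin 0 (Ioi 0))
        (nhdsWithin 0 (Ioi 0)) := by
      rw [tendsto_nhdsWithin_iff]
      constructor
      · have hc : ContinuousAt (fun x : ℝ => x ^ (1 - α/2)) 0 :=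
          Real.continuousAt_rpow_const 0 _ (Or.inr hq.le)
        have h : Tendsto (fun x : ℝ => x ^ (1 - α/2)) (nhdsWithin 0 (Ioi 0)) (nhds ((0:ℝ) ^ (1 - α/2))) :=
          (hc.continuousWithinAt (s := Ioi 0)).tendsto
        rwa [Real.zero_rpow hq.ne'] at h
      · filter_upwards [self_mem_nhdsWithin] with t ht
        exact Real.rpow_pos_of_pos ht _
    have h4 : Tendsto (fun η : ℝ => η ^ (α/2 - 1)) (nhdsWithin 0 (Ioi 0)) atTop := by
      apply h2.inv_tendsto_nhdsGT_zero.congr'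
      filter_upwards [self_mem_nhdsWithin] with t ht
      rw [Pi.inv_apply, ← Real.rpow_neg (le_of_lt ht)]
      norm_num
    have h5 : Tendsto (fun η : ℝ => (1 + α / 2) * (α / 2) * η ^ (α / 2 - 1))
        (nhdsWithin 0 (Ioi 0)) atTop :=
      h4.const_mul_atTop (by nlinarith)
    exact tendsto_neg_atTop_atBot.comp h5
end

section
/- Let α ∈ (0,1) and let ω be the modulus with ω(ξ) = ξ − ξ^{1+α/2} on [0,δ] and ω'(ξ) = γ/(2(ξ+ξ^α)) for ξ > δ. If γ < α²δ and δ is small enough, then for all ξ ≥ δ: ∫_ξ^∞ ω(η)/η^{1+α} dη ≤ (2/α) ω(ξ)/ξ^α. -/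
open Set MeasureTheory

section aux

variable {α δ γ : ℝ}

lemma moc1_g_int (hα : 0 < α) (hδ : 0 < δ) (x : ℝ) :
    IntegrableOn (fun s => γ / (2 * (s + s ^ α))) (Ioc δ x) := by
  rcases le_or_gt x δ with h | h
  · rw [Ioc_eq_empty (by exact fun hlt => absurd h (not_le.mpr hlt))]
    exact integrableOn_empty
  · have hcont : ContinuousOn (fun s : ℝ => γ / (2 * (s + s ^ α))) (Icc δ x) := by
      apply ContinuousOn.div continuousOn_const
      · apply continuousOn_const.mul
        apply ContinuousOn.add continuousOn_id
        intro s hs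
        exact (Real.continuousAt_rpow_const s α (Or.inl (ne_of_gt (lt_of_lt_of_le hδ hs.1)))).continuousWithinAt
      · intro s hs
        have h1 : 0 < s := lt_of_lt_of_le hδ hs.1
        positivity
    exact (hcont.integrableOn_Icc).mono_set Ioc_subset_Icc_self

lemma moc1_g_ii (hα : 0 < α) (hδ : 0 < δ) {a b : ℝ} (ha : δ ≤ a) (hab : a ≤ b) :
    IntervalIntegrable (fun s => γ / (2 * (s + s ^ α))) volume a b := by
  rw [intervalIntegrable_iff, uIoc_of_le hab]
  exact (moc1_g_int hα hδ b).mono_set (Ioc_subset_Ioc_left ha)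

lemma moc1_diff (hα : 0 < α) (hδ : 0 < δ) {ξ η : ℝ} (hξ : δ ≤ ξ) (hη : ξ ≤ η) :
    moc1 α δ γ η = moc1 α δ γ ξ + ∫ s in Ioc ξ η, γ / (2 * (s + s ^ α)) := by
  by_cases hηδ : η ≤ δ
  · have h1 : ξ = δ := le_antisymm (hη.trans hηδ) hξ
    have h2 : η = δ := le_antisymm hηδ (h1 ▸ hη)
    subst h1; subst h2
    simp [moc1]
  · push_neg at hηδ
    rw [moc1, if_neg (not_le.mpr hηδ)]
    by_cases hξδ : ξ ≤ δ
    · have h1 : ξ = δ := le_antisymm hξδ hξ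
      subst h1
      rw [moc1, if_pos le_rfl]
    · push_neg at hξδ
      rw [moc1, if_neg (not_le.mpr hξδ)]
      have key : (∫ s in Ioc δ η, γ / (2 * (s + s ^ α)))
          = (∫ s in Ioc δ ξ, γ / (2 * (s + s ^ α))) + ∫ s in Ioc ξ η, γ / (2 * (s + s ^ α)) := by
        rw [← intervalIntegral.integral_of_le (hξδ.le.trans hη),
          ← intervalIntegral.integral_of_le hξδ.le, ← intervalIntegral.integral_of_le hη]
        exact (intervalIntegral.integral_add_adjacent_intervals
          (moc1_g_ii hα hδ le_rfl hξδ.le) (moc1_g_ii hα hδ hξδ.le hη)).symm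
      rw [key]; ring

lemma moc1_lower (hα : 0 < α) (hδ : 0 < δ) (hγ : 0 < γ) {ξ : ℝ} (hξ : δ ≤ ξ) :
    δ - δ ^ (1 + α / 2) ≤ moc1 α δ γ ξ := by
  rw [moc1_diff hα hδ le_rfl hξ, moc1, if_pos le_rfl]
  have : 0 ≤ ∫ s in Ioc δ ξ, γ / (2 * (s + s ^ α)) := by
    apply setIntegral_nonneg measurableSet_Ioc
    intro s hs
    have h1 : 0 < s := hδ.trans hs.1
    positivity
  linarith

lemma moc1_upper (hα : 0 < α) (hδ : 0 < δ) (hγ : 0 < γ) {ξ η : ℝ} (hξ : δ ≤ ξ) (hη : ξ ≤ η) :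
    moc1 α δ γ η ≤ moc1 α δ γ ξ
      + γ / (2 * (α / 4)) * ξ ^ (-(α / 4)) * (η ^ (α / 4) - ξ ^ (α / 4)) := by
  have hξ0 : 0 < ξ := hδ.trans_le hξ
  rw [moc1_diff hα hδ hξ hη]
  have hb : ∀ s ∈ Ioc ξ η, γ / (2 * (s + s ^ α)) ≤ γ / 2 * ξ ^ (-(α / 4)) * s ^ (α / 4 - 1) := by
    intro s hs
    have h1 : 0 < s := hξ0.trans hs.1
    have step1 : γ / (2 * (s + s ^ α)) ≤ γ / (2 * s) := by
      apply div_le_div_of_nonneg_left hγ.le (by positivity)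
      have : (0:ℝ) ≤ s ^ α := by positivity
      linarith
    have step2 : γ / (2 * s) = γ / 2 * s ^ (-(1:ℝ)) := by
      rw [Real.rpow_neg_one]; field_simp
    have step3 : s ^ (-(1:ℝ)) ≤ ξ ^ (-(α / 4)) * s ^ (α / 4 - 1) := by
      have e1 : s ^ (-(1:ℝ)) = s ^ (-(α / 4)) * s ^ (α / 4 - 1) := by
        rw [← Real.rpow_add h1]; congr 1; ring
      rw [e1]
      apply mul_le_mul_of_nonneg_right _ (by positivity)
      exact Real.rpow_le_rpow_of_nonpos hξ0 hs.1.le (by linarith)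
    calc γ / (2 * (s + s ^ α)) ≤ γ / 2 * s ^ (-(1:ℝ)) := by rw [← step2]; exact step1
      _ ≤ γ / 2 * (ξ ^ (-(α / 4)) * s ^ (α / 4 - 1)) :=
          mul_le_mul_of_nonneg_left step3 (by positivity)
      _ = γ / 2 * ξ ^ (-(α / 4)) * s ^ (α / 4 - 1) := by ring
  have hint1 : IntegrableOn (fun s => γ / (2 * (s + s ^ α))) (Ioc ξ η) :=
    (moc1_g_int hα hδ η).mono_set (Ioc_subset_Ioc_left hξ)
  have hint2 : IntegrableOn (fun s : ℝ => γ / 2 * ξ ^ (-(α / 4)) * s ^ (α / 4 - 1)) (Ioc ξ η) := by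
    have hii : IntervalIntegrable (fun s : ℝ => s ^ (α / 4 - 1)) volume ξ η :=
      intervalIntegral.intervalIntegrable_rpow
        (Or.inr (notMem_uIcc_of_lt hξ0 (hξ0.trans_le hη)))
    have h2 := intervalIntegrable_iff.mp hii
    rw [uIoc_of_le hη] at h2
    exact h2.const_mul _
  have hmono := setIntegral_mono_on hint1 hint2 measurableSet_Ioc hb
  have hcomp : (∫ s in Ioc ξ η, γ / 2 * ξ ^ (-(α / 4)) * s ^ (α / 4 - 1))
      = γ / (2 * (α / 4)) * ξ ^ (-(α / 4)) * (η ^ (α / 4) - ξ ^ (α / 4)) := by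
    rw [← intervalIntegral.integral_of_le hη]
    rw [intervalIntegral.integral_const_mul, integral_rpow (Or.inl (by linarith))]
    have e : α / 4 - 1 + 1 = α / 4 := by ring
    rw [e]
    field_simp
  rw [← hcomp]
  linarith

lemma moc1_meas (hα : 0 < α) (hδ : 0 < δ) (hγ : 0 < γ) : Measurable (moc1 α δ γ) := by
  have hb1 : Continuous fun ξ : ℝ => ξ - ξ ^ (1 + α / 2) := by
    apply continuous_id.sub
    exact continuous_iff_continuousAt.mpr fun x =>
      Real.continuousAt_rpow_const x _ (Or.inr (by positivity))
  have hFmono : Monotone fun x : ℝ => ∫ s in Ioc δ x, γ / (2 * (s + s ^ α)) := by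
    intro a b hab
    apply setIntegral_mono_set (moc1_g_int hα hδ b)
    · rw [Filter.EventuallyLE, ae_restrict_iff' measurableSet_Ioc]
      apply Filter.Eventually.of_forall
      intro s hs
      have h1 : 0 < s := hδ.trans hs.1
      positivity
    · exact (Ioc_subset_Ioc_right hab).eventuallyLE
  exact Measurable.ite measurableSet_Iic hb1.measurable
    (measurable_const.add hFmono.measurable)

end aux

/-- If γ < α²δ and δ is small enough, then for all ξ ≥ δ:
∫_ξ^∞ ω(η)/η^{1+α} dη ≤ (2/α) ω(ξ)/ξ^α for ω = MOC₁. -/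
theorem stmt_11 (α : ℝ) (hα1 : 0 < α) (hα2 : α < 1) :
    ∃ δ₀ > 0, ∀ δ γ : ℝ, 0 < δ → δ < δ₀ → 0 < γ → γ < α ^ 2 * δ →
      ∀ ξ : ℝ, δ ≤ ξ →
        (∫ η in Ioi ξ, moc1 α δ γ η / η ^ (1 + α)) ≤
          (2 / α) * (moc1 α δ γ ξ / ξ ^ α) := by
  refine ⟨min 1 ((1/3 : ℝ) ^ (2/α)),
    lt_min one_pos (Real.rpow_pos_of_pos (by norm_num) _), ?_⟩
  intro δ γ hδ hδ0 hγ hγδ ξ hξ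
  have hξ0 : 0 < ξ := hδ.trans_le hξ
  have hδ1 : δ < 1 := hδ0.trans_le (min_le_left _ _)
  -- δ ^ (α/2) ≤ 1/3
  have hδ2 : δ ^ (α/2) ≤ 1/3 := by
    have h3 : δ ≤ (1/3 : ℝ) ^ (2/α) := (hδ0.trans_le (min_le_right _ _)).le
    calc δ ^ (α/2) ≤ ((1/3 : ℝ) ^ (2/α)) ^ (α/2) :=
          Real.rpow_le_rpow hδ.le h3 (by positivity)
      _ = (1/3 : ℝ) ^ ((2/α) * (α/2)) := (Real.rpow_mul (by norm_num) _ _).symm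
      _ = 1/3 := by
          rw [show (2/α) * (α/2) = 1 by field_simp, Real.rpow_one]
  -- lower bound on ω
  have hlow : ∀ η : ℝ, δ ≤ η → 2/3 * δ ≤ moc1 α δ γ η := by
    intro η hη
    have h1 := moc1_lower hα1 hδ hγ hη
    have h2 : δ ^ (1 + α/2) = δ * δ ^ (α/2) := by
      rw [Real.rpow_add hδ, Real.rpow_one]
    have h3 : δ * δ ^ (α/2) ≤ δ * (1/3) := mul_le_mul_of_nonneg_left hδ2 hδ.le
    nlinarith
  set M := moc1 α δ γ ξ with hM
  have hM0 : 2/3 * δ ≤ M := hlow ξ hξ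
  set c : ℝ := α/4 with hc
  set K : ℝ := γ / (2 * c) * ξ ^ (-c) with hK
  have hK0 : 0 < K := by
    apply mul_pos (by positivity)
    exact Real.rpow_pos_of_pos hξ0 _
  set A : ℝ := M - γ / (2 * c) with hA
  have hKξ : K * ξ ^ c = γ / (2 * c) := by
    rw [hK, mul_assoc, ← Real.rpow_add hξ0]
    simp
  -- upper bound on ω
  have hup : ∀ η : ℝ, ξ ≤ η → moc1 α δ γ η ≤ A + K * η ^ c := by
    intro η hη
    have h1 := moc1_upper hα1 hδ hγ hξ hη
    have h2 : γ / (2 * c) * ξ ^ (-c) * (η ^ c - ξ ^ c)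
        = K * η ^ c - K * ξ ^ c := by rw [hK]; ring
    rw [h2, hKξ] at h1
    rw [hA]; linarith
  -- integrability of the power functions
  have hI1 : IntegrableOn (fun η : ℝ => η ^ (-(1+α))) (Ioi ξ) :=
    integrableOn_Ioi_rpow_of_lt (by linarith) hξ0
  have hI2 : IntegrableOn (fun η : ℝ => η ^ (c - 1 - α)) (Ioi ξ) :=
    integrableOn_Ioi_rpow_of_lt (by rw [hc]; linarith) hξ0
  have hIU : IntegrableOn (fun η : ℝ => A * η ^ (-(1+α)) + K * η ^ (c - 1 - α)) (Ioi ξ) :=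
    (hI1.const_mul A).add (hI2.const_mul K)
  -- pointwise bound on Ioi ξ
  have hpt : ∀ η : ℝ, η ∈ Ioi ξ →
      moc1 α δ γ η / η ^ (1 + α) ≤ A * η ^ (-(1+α)) + K * η ^ (c - 1 - α) ∧
      0 ≤ moc1 α δ γ η / η ^ (1 + α) := by
    intro η hη
    have hη0 : 0 < η := hξ0.trans hη
    have hmoc0 : 0 ≤ moc1 α δ γ η := le_trans (by positivity) (hlow η (hξ.trans (le_of_lt hη)))
    have hpow0 : 0 ≤ η ^ (1 + α) := by positivity
    constructor
    · have e1 : moc1 α δ γ η / η ^ (1 + α) = moc1 α δ γ η * η ^ (-(1+α)) := by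
        rw [Real.rpow_neg hη0.le, div_eq_mul_inv]
      rw [e1]
      have h1 : moc1 α δ γ η * η ^ (-(1+α)) ≤ (A + K * η ^ c) * η ^ (-(1+α)) :=
        mul_le_mul_of_nonneg_right (hup η (le_of_lt hη)) (by positivity)
      apply h1.trans_eq
      have e2 : η ^ c * η ^ (-(1+α)) = η ^ (c - 1 - α) := by
        rw [← Real.rpow_add hη0]; ring_nf
      calc (A + K * η ^ c) * η ^ (-(1+α))
          = A * η ^ (-(1+α)) + K * (η ^ c * η ^ (-(1+α))) := by ring
        _ = A * η ^ (-(1+α)) + K * η ^ (c - 1 - α) := by rw [e2]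
    · positivity
  -- integrability of LHS
  have hmeasL : AEStronglyMeasurable (fun η : ℝ => moc1 α δ γ η / η ^ (1 + α))
      (volume.restrict (Ioi ξ)) := by
    have hpowm : Measurable fun η : ℝ => η ^ (1 + α) :=
      (continuous_iff_continuousAt.mpr fun x =>
        Real.continuousAt_rpow_const x _ (Or.inr (by positivity))).measurable
    exact ((moc1_meas hα1 hδ hγ).div hpowm).aestronglyMeasurable
  have hIL : IntegrableOn (fun η : ℝ => moc1 α δ γ η / η ^ (1 + α)) (Ioi ξ) := by
    apply Integrable.mono' hIU hmeasL
    rw [ae_restrict_iff' measurableSet_Ioi]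
    apply Filter.Eventually.of_forall
    intro η hη
    rw [Real.norm_eq_abs, abs_of_nonneg (hpt η hη).2]
    exact (hpt η hη).1
  -- main comparison
  have hcmp : (∫ η in Ioi ξ, moc1 α δ γ η / η ^ (1 + α))
      ≤ ∫ η in Ioi ξ, (A * η ^ (-(1+α)) + K * η ^ (c - 1 - α)) :=
    setIntegral_mono_on hIL hIU measurableSet_Ioi (fun η hη => (hpt η hη).1)
  -- compute the RHS integral
  have hRHS : (∫ η in Ioi ξ, (A * η ^ (-(1+α)) + K * η ^ (c - 1 - α)))
      = A * (ξ ^ (-α) / α) + K * (ξ ^ (c - α) / (α - c)) := by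
    rw [integral_add ((hI1.const_mul A)) ((hI2.const_mul K)),
      integral_const_mul, integral_const_mul,
      integral_Ioi_rpow_of_lt (by linarith) hξ0,
      integral_Ioi_rpow_of_lt (by rw [hc]; linarith) hξ0]
    have e1 : -(1+α) + 1 = -α := by ring
    have e2 : c - 1 - α + 1 = c - α := by ring
    have e3 : -ξ ^ (-α) / -α = ξ ^ (-α) / α := neg_div_neg_eq _ _
    have e4 : -ξ ^ (c - α) / (c - α) = ξ ^ (c - α) / (α - c) := by
      rw [show c - α = -(α - c) by ring]; exact neg_div_neg_eq _ _
    rw [e1, e2, e3, e4]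
  -- simplify K * ξ ^ (c - α)
  have hKξ2 : K * ξ ^ (c - α) = γ / (2 * c) * ξ ^ (-α) := by
    rw [hK, mul_assoc, ← Real.rpow_add hξ0]
    congr 2
    ring
  -- final arithmetic
  have hXpos : (0:ℝ) < ξ ^ (-α) := Real.rpow_pos_of_pos hξ0 _
  set X : ℝ := ξ ^ (-α) with hX
  have hRHS2 : K * (ξ ^ (c - α) / (α - c)) = (γ / (2 * c) * X) / (α - c) := by
    rw [← mul_div_assoc, hKξ2]
  have htarget : (2 / α) * (moc1 α δ γ ξ / ξ ^ α) = 2 / α * (M * X) := by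
    rw [hX, Real.rpow_neg hξ0.le]; ring
  rw [htarget]
  refine hcmp.trans ?_
  rw [hRHS, hRHS2]
  -- need: A * (X/α) + (γ/(2c) * X)/(α - c) ≤ 2/α * (M * X)
  have hc0 : 0 < c := by rw [hc]; linarith
  have hαc : 0 < α - c := by rw [hc]; linarith
  have hγM : 2 * γ ≤ 3 * α * M := by
    nlinarith [mul_le_mul_of_nonneg_left hM0 (le_of_lt (by positivity : (0:ℝ) < 3 * α)),
      mul_lt_mul_of_pos_right hγδ (by norm_num : (0:ℝ) < 2), sq_nonneg α,
      mul_le_mul_of_nonneg_right hα2.le hδ.le]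
  have hγM2 : (γ / 2) / (α - c) ≤ M := by
    rw [div_le_iff₀ hαc, hc]
    nlinarith [hγM]
  have hscal : A / α + (γ / (2 * c)) / (α - c) ≤ 2 / α * M := by
    have key : A / α + (γ / (2 * c)) / (α - c)
        = 2 / α * M - (M - (γ / 2) / (α - c)) / α := by
      rw [hA]
      field_simp
      ring
    rw [key]
    have h0 : 0 ≤ (M - (γ / 2) / (α - c)) / α := div_nonneg (by linarith) hα1.le
    linarith
  calc A * (X / α) + (γ / (2 * c) * X) / (α - c)
      = (A / α + (γ / (2 * c)) / (α - c)) * X := by ring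
    _ ≤ (2 / α * M) * X := mul_le_mul_of_nonneg_right hscal hXpos.le
    _ = 2 / α * (M * X) := by ring
end

section
/- Let α ∈ (0,1) and ω be as in MOC₁ (ω(ξ) = ξ − ξ^{1+α/2} on [0,δ], ω'(ξ) = γ/(2(ξ+ξ^α)) for ξ > δ). If γ is small enough relative to δ, then for all ξ ≥ δ: ω(2ξ) ≤ (3/2) ω(ξ). -/
open Set MeasureTheory

lemma moc1_contOn (α γ δ x : ℝ) (hδ : 0 < δ) :
    ContinuousOn (fun η : ℝ => γ / (2 * (η + η ^ α))) (Icc δ x) := by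
  apply ContinuousOn.div continuousOn_const
  · exact continuousOn_const.mul (continuousOn_id.add fun η hη =>
      (Real.continuousAt_rpow_const η α (Or.inl (hδ.trans_le hη.1).ne')).continuousWithinAt)
  · intro η hη
    have h0 : 0 < η := hδ.trans_le hη.1
    have h1 : 0 < η ^ α := Real.rpow_pos_of_pos h0 α
    positivity

lemma moc1_eq (α γ δ x : ℝ) (hδ : 0 < δ) (hx : δ ≤ x) :
    moc1 α δ γ x = (δ - δ ^ (1 + α / 2)) + ∫ η in δ..x, γ / (2 * (η + η ^ α)) := by
  rw [intervalIntegral.integral_of_le hx]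
  unfold moc1
  rcases eq_or_lt_of_le hx with h | h
  · simp [← h]
  · rw [if_neg (not_le.2 h)]

/-- If γ is small enough relative to δ (γ < α²δ, δ small), then for all ξ ≥ δ:
ω(2ξ) ≤ (3/2) ω(ξ) for ω = MOC₁. -/
theorem stmt_12 (α : ℝ) (hα1 : 0 < α) (hα2 : α < 1) :
    ∃ δ₀ > 0, ∀ δ γ : ℝ, 0 < δ → δ < δ₀ → 0 < γ → γ < α ^ 2 * δ →
      ∀ ξ : ℝ, δ ≤ ξ → moc1 α δ γ (2 * ξ) ≤ (3 / 2) * moc1 α δ γ ξ := by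
  have hlog2 : (0:ℝ) < Real.log 2 := Real.log_pos (by norm_num)
  set c : ℝ := 1 - α ^ 2 * Real.log 2 with hc_def
  have hα2' : α ^ 2 < 1 := by nlinarith
  have hc : 0 < c := by nlinarith [Real.log_two_lt_d9]
  refine ⟨c ^ (2 / α), Real.rpow_pos_of_pos hc _, ?_⟩
  intro δ γ hδ hδ₀ hγ hγα ξ hξ
  have hξpos : 0 < ξ := hδ.trans_le hξ
  -- key: δ^{α/2} < c
  have hpow : δ ^ (α / 2) < c := by
    have h1 : δ ^ (α / 2) < (c ^ (2 / α)) ^ (α / 2) :=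
      Real.rpow_lt_rpow hδ.le hδ₀ (by positivity)
    have h2 : (c ^ (2 / α)) ^ (α / 2) = c := by
      rw [← Real.rpow_mul hc.le,
        show 2 / α * (α / 2) = 1 by field_simp, Real.rpow_one]
    rw [h2] at h1; exact h1
  have hsplit : δ ^ (1 + α / 2) = δ * δ ^ (α / 2) := by
    rw [Real.rpow_add hδ, Real.rpow_one]
  -- key: γ log 2 ≤ δ - δ^{1+α/2}
  have hbase : γ * Real.log 2 ≤ δ - δ ^ (1 + α / 2) := by
    rw [hsplit]; nlinarith
  set f : ℝ → ℝ := fun η => γ / (2 * (η + η ^ α)) with hf_def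
  have hint1 : IntervalIntegrable f volume δ ξ :=
    (moc1_contOn α γ δ ξ hδ).intervalIntegrable_of_Icc hξ
  have hint2 : IntervalIntegrable f volume ξ (2 * ξ) := by
    refine ((moc1_contOn α γ ξ (2 * ξ) hξpos).mono ?_).intervalIntegrable_of_Icc (by linarith)
    exact Icc_subset_Icc le_rfl le_rfl
  have hint2' : IntervalIntegrable (fun η : ℝ => γ / (2 * η)) volume ξ (2 * ξ) := by
    apply ContinuousOn.intervalIntegrable_of_Icc (by linarith)
    apply ContinuousOn.div continuousOn_const (continuous_const.mul continuous_id).continuousOn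
    intro η hη
    have : 0 < η := hξpos.trans_le hη.1
    show (2:ℝ) * η ≠ 0
    positivity
  -- the tail integral bound
  have htail : ∫ η in ξ..(2 * ξ), f η ≤ γ / 2 * Real.log 2 := by
    have h1 : ∫ η in ξ..(2 * ξ), f η ≤ ∫ η in ξ..(2 * ξ), γ / (2 * η) := by
      apply intervalIntegral.integral_mono_on (by linarith) hint2 hint2'
      intro η hη
      have h0 : 0 < η := hξpos.trans_le hη.1
      have h1 : 0 < η ^ α := Real.rpow_pos_of_pos h0 α
      show γ / (2 * (η + η ^ α)) ≤ γ / (2 * η)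
      gcongr γ / (2 * ?_)
      linarith
    have h2 : ∫ η in ξ..(2 * ξ), γ / (2 * η) = γ / 2 * Real.log 2 := by
      have : ∀ η : ℝ, γ / (2 * η) = (γ / 2) * (1 / η) := by intro η; ring
      simp_rw [this]
      rw [intervalIntegral.integral_const_mul, integral_one_div]
      · rw [show (2 * ξ) / ξ = 2 by field_simp]
      · intro h
        rcases h with h
        simp only [Set.mem_uIcc] at h
        rcases h with ⟨h1, _⟩ | ⟨_, h2⟩ <;> linarith
    linarith
  have hmono : (0:ℝ) ≤ ∫ η in δ..ξ, f η := by
    apply intervalIntegral.integral_nonneg hξ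
    intro η hη
    have h0 : 0 < η := hδ.trans_le hη.1
    have h1 : 0 < η ^ α := Real.rpow_pos_of_pos h0 α
    positivity
  have hadd : ∫ η in δ..(2 * ξ), f η = (∫ η in δ..ξ, f η) + ∫ η in ξ..(2 * ξ), f η :=
    (intervalIntegral.integral_add_adjacent_intervals hint1 hint2).symm
  rw [moc1_eq α γ δ (2 * ξ) hδ (by linarith), moc1_eq α γ δ ξ hδ hξ, hadd]
  nlinarith [hmono, htail, hbase, hγ.le, hlog2]
end

section
/- Let ω be a concave increasing modulus of continuity with ω(2ξ) ≤ (3/2)ω(ξ) for ξ ≥ δ. Then for ξ ≥ δ and 0 < α < 2, ∫_{ξ/2}^∞ (ω(2η+ξ) − ω(2η−ξ) − 2ω(ξ))/η^{1+α} dη ≤ −(2^α/(2α)) ω(ξ)/ξ^α. -/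
open Set MeasureTheory

/-- If ω is a concave increasing modulus of continuity with ω(2ξ) ≤ (3/2)ω(ξ) for ξ ≥ δ,
then for ξ ≥ δ and 0 < α < 2,
∫_{ξ/2}^∞ (ω(2η+ξ) − ω(2η−ξ) − 2ω(ξ))/η^{1+α} dη ≤ −(2^α/(2α)) ω(ξ)/ξ^α. -/
theorem stmt_13 (α δ : ℝ) (hα1 : 0 < α) (hα2 : α < 2) (hδ : 0 < δ)
    (ω : ℝ → ℝ) (hcont : Continuous ω) (hconc : ConcaveOn ℝ (Ici 0) ω)
    (hmono : MonotoneOn ω (Ici 0)) (hω0 : ω 0 = 0)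
    (hdbl : ∀ ξ : ℝ, δ ≤ ξ → ω (2 * ξ) ≤ (3 / 2) * ω ξ) :
    ∀ ξ : ℝ, δ ≤ ξ →
      (∫ η in Ioi (ξ / 2), (ω (2 * η + ξ) - ω (2 * η - ξ) - 2 * ω ξ) / η ^ (1 + α)) ≤
        -((2 : ℝ) ^ α / (2 * α)) * (ω ξ / ξ ^ α) := by
  intro ξ hξ
  have hξ0 : 0 < ξ := lt_of_lt_of_le hδ hξ
  have hωnn : ∀ x : ℝ, 0 ≤ x → 0 ≤ ω x := by
    intro x hx
    have := hmono (self_mem_Ici) (mem_Ici.2 hx) hx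
    rwa [hω0] at this
  -- subadditivity of ω from concavity and ω 0 = 0
  have subadd : ∀ b c : ℝ, 0 ≤ b → 0 ≤ c → ω (b + c) ≤ ω b + ω c := by
    intro b c hb hc
    rcases eq_or_lt_of_le (add_nonneg hb hc) with h0 | hpos
    · have hb0 : b = 0 := by linarith
      have hc0 : c = 0 := by linarith
      simp [hb0, hc0, hω0]
    · set s := b + c with hs
      have hs0 : (0:ℝ) < s := hpos
      have hsum1 : c / s + b / s = 1 := by
        rw [← add_div, add_comm, ← hs, div_self hs0.ne']
      have hsum2 : b / s + c / s = 1 := by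
        rw [← add_div, ← hs, div_self hs0.ne']
      have h1 := hconc.2 (mem_Ici.2 hs0.le) (self_mem_Ici (a := (0:ℝ)))
        (div_nonneg hc hs0.le) (div_nonneg hb hs0.le) hsum1
      have h2 := hconc.2 (mem_Ici.2 hs0.le) (self_mem_Ici (a := (0:ℝ)))
        (div_nonneg hb hs0.le) (div_nonneg hc hs0.le) hsum2
      simp only [smul_eq_mul, hω0, mul_zero, add_zero] at h1 h2
      rw [div_mul_cancel₀ _ hs0.ne'] at h1 h2
      -- h1 : (c/s) * ω s ≤ ω c, h2 : (b/s) * ω s ≤ ω b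
      have hkey : c / s * ω s + b / s * ω s = ω s := by
        rw [← add_mul, hsum1, one_mul]
      linarith
  -- pointwise bound
  have hbound : ∀ η ∈ Ioi (ξ / 2),
      (ω (2 * η + ξ) - ω (2 * η - ξ) - 2 * ω ξ) / η ^ (1 + α)
        ≤ (-(1/2) * ω ξ) * η ^ (-(1 + α)) := by
    intro η hη
    rw [mem_Ioi] at hη
    have hη0 : 0 < η := lt_of_le_of_lt (by positivity) hη
    have hb : 0 ≤ 2 * η - ξ := by linarith
    have h1 : ω (2 * η + ξ) ≤ ω (2 * η - ξ) + ω (2 * ξ) := by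
      have := subadd (2 * η - ξ) (2 * ξ) hb (by linarith)
      have he : 2 * η - ξ + 2 * ξ = 2 * η + ξ := by ring
      rwa [he] at this
    have h2 : ω (2 * ξ) ≤ (3/2) * ω ξ := hdbl ξ hξ
    have hnum : ω (2 * η + ξ) - ω (2 * η - ξ) - 2 * ω ξ ≤ -(1/2) * ω ξ := by linarith
    have hpow : (0:ℝ) < η ^ (1 + α) := Real.rpow_pos_of_pos hη0 _
    have heq : (-(1/2) * ω ξ) * η ^ (-(1 + α)) = (-(1/2) * ω ξ) / η ^ (1 + α) := by
      rw [Real.rpow_neg hη0.le]; ring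
    rw [heq]
    exact (div_le_div_iff_of_pos_right hpow).mpr hnum
  have hmeas : MeasurableSet (Ioi (ξ / 2)) := measurableSet_Ioi
  have hξ2 : (0:ℝ) < ξ / 2 := by linarith
  have hexp : -(1 + α) < -1 := by linarith
  -- integrability of the dominating function
  have hg_int : IntegrableOn (fun η : ℝ => (-(1/2) * ω ξ) * η ^ (-(1 + α))) (Ioi (ξ / 2)) :=
    (integrableOn_Ioi_rpow_of_lt hexp hξ2).const_mul _
  -- integrability of the integrand
  have hf_cont : ContinuousOn
      (fun η : ℝ => (ω (2 * η + ξ) - ω (2 * η - ξ) - 2 * ω ξ) / η ^ (1 + α)) (Ioi (ξ / 2)) := by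
    apply ContinuousOn.div
    · exact (((hcont.comp (by continuity)).sub (hcont.comp (by continuity))).sub
        continuous_const).continuousOn
    · intro η hη
      have hη0 : 0 < η := hξ2.trans hη
      exact (Real.continuousAt_rpow_const η (1 + α) (Or.inl hη0.ne')).continuousWithinAt
    · intro η hη
      have hη0 : 0 < η := hξ2.trans hη
      exact (Real.rpow_pos_of_pos hη0 _).ne'
  have hf_int : IntegrableOn
      (fun η : ℝ => (ω (2 * η + ξ) - ω (2 * η - ξ) - 2 * ω ξ) / η ^ (1 + α)) (Ioi (ξ / 2)) := by
    have hmaj : IntegrableOn (fun η : ℝ => (ω (2 * ξ) + 2 * ω ξ) * η ^ (-(1 + α))) (Ioi (ξ / 2)) :=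
      (integrableOn_Ioi_rpow_of_lt hexp hξ2).const_mul _
    refine hmaj.mono' (hf_cont.aestronglyMeasurable hmeas) ?_
    filter_upwards [ae_restrict_mem hmeas] with η hη
    rw [mem_Ioi] at hη
    have hη0 : 0 < η := hξ2.trans hη
    have hb : 0 ≤ 2 * η - ξ := by linarith
    have hpow : (0:ℝ) < η ^ (1 + α) := Real.rpow_pos_of_pos hη0 _
    have hmono1 : ω (2 * η - ξ) ≤ ω (2 * η + ξ) :=
      hmono (mem_Ici.2 hb) (mem_Ici.2 (by linarith)) (by linarith)
    have h1 : ω (2 * η + ξ) ≤ ω (2 * η - ξ) + ω (2 * ξ) := by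
      have := subadd (2 * η - ξ) (2 * ξ) hb (by linarith)
      have he : 2 * η - ξ + 2 * ξ = 2 * η + ξ := by ring
      rwa [he] at this
    have hωξ := hωnn ξ hξ0.le
    have hω2ξ := hωnn (2 * ξ) (by linarith)
    have hnumabs : |ω (2 * η + ξ) - ω (2 * η - ξ) - 2 * ω ξ| ≤ ω (2 * ξ) + 2 * ω ξ := by
      rw [abs_le]
      constructor
      · linarith
      · linarith
    rw [Real.norm_eq_abs, abs_div, abs_of_pos hpow, div_le_iff₀ hpow, Real.rpow_neg hη0.le]
    calc |ω (2 * η + ξ) - ω (2 * η - ξ) - 2 * ω ξ| ≤ ω (2 * ξ) + 2 * ω ξ := hnumabs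
      _ = (ω (2 * ξ) + 2 * ω ξ) * (η ^ (1 + α))⁻¹ * η ^ (1 + α) := by field_simp
  -- integral comparison
  have hle := setIntegral_mono_on hf_int hg_int hmeas hbound
  refine hle.trans ?_
  rw [MeasureTheory.integral_const_mul, integral_Ioi_rpow_of_lt hexp hξ2]
  have he : -(1 + α) + 1 = -α := by ring
  rw [he]
  have hval : (ξ / 2) ^ (-α) = 2 ^ α / ξ ^ α := by
    rw [Real.rpow_neg hξ2.le, Real.div_rpow hξ0.le (by norm_num : (0:ℝ) ≤ 2), inv_div]
  rw [hval]
  have hξα : (0:ℝ) < ξ ^ α := Real.rpow_pos_of_pos hξ0 _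
  apply le_of_eq
  field_simp
end

section
/- Let ω be a modulus of continuity with ω(0) = 0, ω concave and increasing, and let θ : ℝⁿ → ℝ satisfy |θ(x) − θ(y)| ≤ ω(|x−y|) for all x,y, and let u : ℝⁿ → ℝⁿ satisfy |u(x) − u(y)| ≤ Ω(|x−y|). If θ(x) − θ(y) = ω(ξ) with |x−y| = ξ > 0, ω differentiable at ξ, and Ω continuous, then limsup_{h→0+} [θ(x + h u(x)) − θ(y + h u(y)) − ω(ξ)]/h ≤ Ω(ξ) ω'(ξ). -/
open Filter Set

/-- If θ has modulus of continuity ω, u has modulus of continuity Ω, and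
θ(x) − θ(y) = ω(ξ) with |x−y| = ξ > 0, ω differentiable at ξ, then
limsup_{h→0⁺} [θ(x + h u(x)) − θ(y + h u(y)) − ω(ξ)]/h ≤ Ω(ξ) ω'(ξ). -/
theorem stmt_19 (n : ℕ) (hn : 1 ≤ n)
    (ω Ω : ℝ → ℝ)
    (hωconc : ConcaveOn ℝ (Ici 0) ω) (hωmono : MonotoneOn ω (Ici 0))
    (hωcont : ContinuousOn ω (Ici 0)) (hω0 : ω 0 = 0)
    (hΩconc : ConcaveOn ℝ (Ici 0) Ω) (hΩmono : MonotoneOn Ω (Ici 0))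
    (hΩcont : Continuous Ω) (hΩ0 : Ω 0 = 0)
    (θ : EuclideanSpace ℝ (Fin n) → ℝ)
    (u : EuclideanSpace ℝ (Fin n) → EuclideanSpace ℝ (Fin n))
    (hθ : ContDiff ℝ 1 θ)
    (hθmod : ∀ a b, |θ a - θ b| ≤ ω ‖a - b‖)
    (humod : ∀ a b, ‖u a - u b‖ ≤ Ω ‖a - b‖)
    (x y : EuclideanSpace ℝ (Fin n)) (ξ ω'ξ : ℝ)
    (hξ : 0 < ξ) (hxy : ‖x - y‖ = ξ) (hval : θ x - θ y = ω ξ)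
    (hder : HasDerivAt ω ω'ξ ξ) :
    Filter.limsup (fun h : ℝ => (θ (x + h • u x) - θ (y + h • u y) - ω ξ) / h)
      (nhdsWithin 0 (Ioi 0)) ≤ Ω ξ * ω'ξ := by
  have hΩξnn : 0 ≤ Ω ξ := by
    have := hΩmono (mem_Ici.2 le_rfl) (mem_Ici.2 hξ.le) hξ.le
    simpa [hΩ0] using this
  set A : ℝ → ℝ := fun h => θ (x + h • u x) with hAdef
  set B : ℝ → ℝ := fun h => θ (y + h • u y) with hBdef
  have hsub : Ioi (0:ℝ) ⊆ {(0:ℝ)}ᶜ := fun h hh => mem_compl_singleton_iff.mpr (ne_of_gt hh)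
  -- derivative of A at 0
  have hlineA : HasDerivAt (fun h : ℝ => x + h • u x) (u x) 0 := by
    simpa using ((hasDerivAt_id (0:ℝ)).smul_const (u x)).const_add x
  have hlineB : HasDerivAt (fun h : ℝ => y + h • u y) (u y) 0 := by
    simpa using ((hasDerivAt_id (0:ℝ)).smul_const (u y)).const_add y
  have hθdx : HasFDerivAt θ (fderiv ℝ θ x) (x + (0:ℝ) • u x) := by
    simpa using ((hθ.differentiable one_ne_zero) x).hasFDerivAt
  have hθdy : HasFDerivAt θ (fderiv ℝ θ y) (y + (0:ℝ) • u y) := by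
    simpa using ((hθ.differentiable one_ne_zero) y).hasFDerivAt
  have hA : HasDerivAt A (fderiv ℝ θ x (u x)) 0 := hθdx.comp_hasDerivAt 0 hlineA
  have hB : HasDerivAt B (fderiv ℝ θ y (u y)) 0 := hθdy.comp_hasDerivAt 0 hlineB
  have hAs : Tendsto (slope A 0) (nhdsWithin 0 (Ioi 0)) (nhds (fderiv ℝ θ x (u x))) :=
    (hasDerivAt_iff_tendsto_slope.1 hA).mono_left (nhdsWithin_mono _ hsub)
  have hBs : Tendsto (slope B 0) (nhdsWithin 0 (Ioi 0)) (nhds (fderiv ℝ θ y (u y))) :=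
    (hasDerivAt_iff_tendsto_slope.1 hB).mono_left (nhdsWithin_mono _ hsub)
  -- f equals slope A - slope B on Ioi 0
  have hA0 : A 0 = θ x := by simp [hAdef]
  have hB0 : B 0 = θ y := by simp [hBdef]
  have hfeq : ∀ h ∈ Ioi (0:ℝ),
      (θ (x + h • u x) - θ (y + h • u y) - ω ξ) / h = slope A 0 h - slope B 0 h := by
    intro h hh
    have hne : h ≠ 0 := ne_of_gt hh
    rw [slope_def_field, slope_def_field, hA0, hB0, ← hval]
    field_simp
    ring
  have hftend : Tendsto (fun h : ℝ => (θ (x + h • u x) - θ (y + h • u y) - ω ξ) / h)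
      (nhdsWithin 0 (Ioi 0)) (nhds (fderiv ℝ θ x (u x) - fderiv ℝ θ y (u y))) := by
    refine (hAs.sub hBs).congr' ?_
    filter_upwards [self_mem_nhdsWithin] with h hh
    exact (hfeq h hh).symm
  -- the comparison function g
  set φ : ℝ → ℝ := fun h => ξ + h * Ω ξ with hφdef
  have hφ : HasDerivAt φ (Ω ξ) 0 := by
    simpa [hφdef] using ((hasDerivAt_id (0:ℝ)).mul_const (Ω ξ)).const_add ξ
  have hderφ : HasDerivAt ω ω'ξ (φ 0) := by simpa [hφdef] using hder
  have hcomp : HasDerivAt (fun h => ω (φ h)) (ω'ξ * Ω ξ) 0 := hderφ.comp 0 hφ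
  have hgeq : ∀ h : ℝ, slope (fun h => ω (φ h)) 0 h = (ω (ξ + h * Ω ξ) - ω ξ) / h := by
    intro h
    rw [slope_def_field]
    simp [hφdef]
  have hgtend : Tendsto (fun h : ℝ => (ω (ξ + h * Ω ξ) - ω ξ) / h)
      (nhdsWithin 0 (Ioi 0)) (nhds (ω'ξ * Ω ξ)) := by
    refine ((hasDerivAt_iff_tendsto_slope.1 hcomp).mono_left (nhdsWithin_mono _ hsub)).congr ?_
    exact hgeq
  -- pointwise inequality
  have hle : ∀ h ∈ Ioi (0:ℝ),
      (θ (x + h • u x) - θ (y + h • u y) - ω ξ) / h ≤ (ω (ξ + h * Ω ξ) - ω ξ) / h := by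
    intro h hh
    have hh' : (0:ℝ) < h := hh
    have hnorm : ‖(x + h • u x) - (y + h • u y)‖ ≤ ξ + h * Ω ξ := by
      have heq : (x + h • u x) - (y + h • u y) = (x - y) + h • (u x - u y) := by
        rw [smul_sub]; abel
      rw [heq]
      calc ‖(x - y) + h • (u x - u y)‖ ≤ ‖x - y‖ + ‖h • (u x - u y)‖ := norm_add_le _ _
        _ = ξ + h * ‖u x - u y‖ := by
            rw [hxy, norm_smul, Real.norm_eq_abs, abs_of_pos hh]
        _ ≤ ξ + h * Ω ξ := by
            have := humod x y
            rw [hxy] at this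
            nlinarith [hh'.le]
    have hθle : θ (x + h • u x) - θ (y + h • u y) ≤ ω (ξ + h * Ω ξ) := by
      calc θ (x + h • u x) - θ (y + h • u y) ≤ |θ (x + h • u x) - θ (y + h • u y)| :=
            le_abs_self _
        _ ≤ ω ‖(x + h • u x) - (y + h • u y)‖ := hθmod _ _
        _ ≤ ω (ξ + h * Ω ξ) := by
            refine hωmono (mem_Ici.2 (norm_nonneg _)) (mem_Ici.2 ?_) hnorm
            nlinarith [mul_nonneg hh'.le hΩξnn]
    gcongr
  -- conclude
  have hlimsup : Filter.limsup (fun h : ℝ => (θ (x + h • u x) - θ (y + h • u y) - ω ξ) / h)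
      (nhdsWithin 0 (Ioi 0)) = fderiv ℝ θ x (u x) - fderiv ℝ θ y (u y) :=
    hftend.limsup_eq
  rw [hlimsup, mul_comm]
  refine le_of_tendsto_of_tendsto hftend hgtend ?_
  filter_upwards [self_mem_nhdsWithin] with h hh using hle h hh
end
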